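/- Let 𝒜 : ℝ^{n×n} → ℝ^m satisfy 6r-RIP with constant δ_{6r} ≤ 1/10, let X ∈ ℝ^{n×r}, and define ∇f(U) := Σ_{k=1}^m ⟨A_k, UUᵀ − XXᵀ⟩ A_k U. Then for all U ∈ ℝ^{n×r}, ‖U‖_{op}²·‖UUᵀ − XXᵀ‖_F² ≥ (10/17)·‖∇f(U)‖_F². -/

import Mathlib

open Matrix

noncomputable def vnorm {ι : Type*} [Fintype ι] (v : ι → ℝ) : ℝ :=
  Real.sqrt (∑ i, v i ^ 2)

noncomputable def frob {α β : Type*} [Fintype α] [Fintype β] (M : Matrix α β ℝ) : ℝ :=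
  Real.sqrt (∑ i, ∑ j, M i j ^ 2)

noncomputable def sval {α β : Type*} [Fintype α] [Fintype β] (M : Matrix α β ℝ) (k : ℕ) : ℝ :=
  sSup { t : ℝ | ∃ V : Submodule ℝ (β → ℝ), Module.finrank ℝ V = k ∧
    ∀ v ∈ V, t * vnorm v ≤ vnorm (M.mulVec v) }

noncomputable def opNorm {α β : Type*} [Fintype α] [Fintype β] (M : Matrix α β ℝ) : ℝ :=
  sval M 1

noncomputable def pdist {α ρ : Type*} [Fintype α] [Fintype ρ] [DecidableEq ρ]
    (U X : Matrix α ρ ℝ) : ℝ :=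
  sInf { d : ℝ | ∃ R : Matrix ρ ρ ℝ, Rᵀ * R = 1 ∧ d = frob (U - X * R) }

noncomputable def mip {α β : Type*} [Fintype α] [Fintype β] (A B : Matrix α β ℝ) : ℝ :=
  ∑ i, ∑ j, A i j * B i j

noncomputable def mapA {m : ℕ} {α β : Type*} [Fintype α] [Fintype β]
    (A : Fin m → Matrix α β ℝ) (Z : Matrix α β ℝ) : Fin m → ℝ :=
  fun k => mip (A k) Z

def HasRIP {m n₁ n₂ : ℕ} (A : Fin m → Matrix (Fin n₁) (Fin n₂) ℝ) (s : ℕ) (δ : ℝ) : Prop :=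
  ∀ Z : Matrix (Fin n₁) (Fin n₂) ℝ, Z.rank ≤ s →
    (1 - δ) * frob Z ^ 2 ≤ ∑ k, mapA A Z k ^ 2 ∧
      ∑ k, mapA A Z k ^ 2 ≤ (1 + δ) * frob Z ^ 2

noncomputable def gradU {m n₁ n₂ r : ℕ} (A : Fin m → Matrix (Fin n₁) (Fin n₂) ℝ)
    (M : Matrix (Fin n₁) (Fin n₂) ℝ)
    (U : Matrix (Fin n₁) (Fin r) ℝ) (V : Matrix (Fin n₂) (Fin r) ℝ) :
    Matrix (Fin n₁) (Fin r) ℝ :=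
  (∑ k, mip (A k) (U * Vᵀ - M) • (A k * V)) + (1 / 4 : ℝ) • (U * (Uᵀ * U - Vᵀ * V))

noncomputable def gradV {m n₁ n₂ r : ℕ} (A : Fin m → Matrix (Fin n₁) (Fin n₂) ℝ)
    (M : Matrix (Fin n₁) (Fin n₂) ℝ)
    (U : Matrix (Fin n₁) (Fin r) ℝ) (V : Matrix (Fin n₂) (Fin r) ℝ) :
    Matrix (Fin n₂) (Fin r) ℝ :=
  (∑ k, mip (A k) (U * Vᵀ - M) • ((A k)ᵀ * U)) + (1 / 4 : ℝ) • (V * (Vᵀ * V - Uᵀ * U))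

noncomputable def gradg {m n₁ n₂ r : ℕ} (A : Fin m → Matrix (Fin n₁) (Fin n₂) ℝ)
    (M : Matrix (Fin n₁) (Fin n₂) ℝ)
    (U : Matrix (Fin n₁) (Fin r) ℝ) (V : Matrix (Fin n₂) (Fin r) ℝ) :
    Matrix (Fin n₁ ⊕ Fin n₂) (Fin r) ℝ :=
  Matrix.fromRows (gradU A M U V) (gradV A M U V)

section helpers
variable {α β γ : Type*} [Fintype α] [Fintype β] [Fintype γ]

lemma frob_nonneg (M : Matrix α β ℝ) : 0 ≤ frob M := Real.sqrt_nonneg _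

lemma frob_sq (M : Matrix α β ℝ) : frob M ^ 2 = ∑ i, ∑ j, M i j ^ 2 := by
  rw [frob, Real.sq_sqrt]; positivity

lemma vnorm_nonneg (v : β → ℝ) : 0 ≤ vnorm v := Real.sqrt_nonneg _

lemma vnorm_sq (v : β → ℝ) : vnorm v ^ 2 = ∑ i, v i ^ 2 := by
  rw [vnorm, Real.sq_sqrt]; positivity

lemma vnorm_pos {v : β → ℝ} (hv : v ≠ 0) : 0 < vnorm v := by
  rw [vnorm, Real.sqrt_pos]
  obtain ⟨j, hj⟩ := Function.ne_iff.mp hv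
  exact Finset.sum_pos' (fun i _ => sq_nonneg _) ⟨j, Finset.mem_univ _, by have := sq_abs (v j) ▸ pow_pos (abs_pos.mpr hj) 2; linarith⟩

lemma vnorm_smul (c : ℝ) (v : β → ℝ) : vnorm (c • v) = |c| * vnorm v := by
  rw [vnorm, vnorm]
  simp only [Pi.smul_apply, smul_eq_mul, mul_pow]
  rw [← Finset.mul_sum, Real.sqrt_mul (sq_nonneg c), Real.sqrt_sq_eq_abs]

lemma le_of_sq_le_sq' {a b : ℝ} (h : a ^ 2 ≤ b ^ 2) (hb : 0 ≤ b) : a ≤ b := by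
  nlinarith [sq_nonneg (a - b), sq_nonneg (a + b)]

lemma mip_self (M : Matrix α β ℝ) : mip M M = frob M ^ 2 := by
  rw [frob_sq, mip]; simp [sq]

lemma mip_comm (M N : Matrix α β ℝ) : mip M N = mip N M := by
  unfold mip; congr 1; ext i; congr 1; ext j; ring

lemma mip_add_left (M N Z : Matrix α β ℝ) : mip (M + N) Z = mip M Z + mip N Z := by
  unfold mip
  simp [Matrix.add_apply, add_mul, Finset.sum_add_distrib]

lemma mip_add_right (M N Z : Matrix α β ℝ) : mip Z (M + N) = mip Z M + mip Z N := by
  rw [mip_comm, mip_add_left, mip_comm M Z, mip_comm N Z]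

lemma mip_smul_left (c : ℝ) (M Z : Matrix α β ℝ) : mip (c • M) Z = c * mip M Z := by
  unfold mip
  simp [Matrix.smul_apply, smul_eq_mul, mul_assoc, Finset.mul_sum]

lemma mip_smul_right (c : ℝ) (M Z : Matrix α β ℝ) : mip Z (c • M) = c * mip Z M := by
  rw [mip_comm, mip_smul_left, mip_comm]

lemma mip_sub_right (M N Z : Matrix α β ℝ) : mip Z (M - N) = mip Z M - mip Z N := by
  have : M - N = M + (-1 : ℝ) • N := by simp [sub_eq_add_neg]
  rw [this, mip_add_right, mip_smul_right]; ring

lemma mip_sum_left {ι : Type*} (s : Finset ι) (f : ι → Matrix α β ℝ) (Z : Matrix α β ℝ) :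
    mip (∑ k ∈ s, f k) Z = ∑ k ∈ s, mip (f k) Z := by
  classical
  induction s using Finset.induction with
  | empty => simp [mip]
  | @insert a s h ih => rw [Finset.sum_insert h, mip_add_left, ih, Finset.sum_insert h]

lemma mip_le (Y Z : Matrix α β ℝ) : mip Y Z ≤ frob Y * frob Z := by
  have h : mip Y Z ^ 2 ≤ (frob Y * frob Z) ^ 2 := by
    rw [mul_pow, frob_sq, frob_sq, mip]
    have h1 : (∑ i, ∑ j, Y i j * Z i j) = ∑ p : α × β, Y p.1 p.2 * Z p.1 p.2 := by
      rw [← Finset.sum_product', Finset.univ_product_univ]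
    have h2 : (∑ i, ∑ j, Y i j ^ 2) = ∑ p : α × β, Y p.1 p.2 ^ 2 := by
      rw [← Finset.sum_product', Finset.univ_product_univ]
    have h3 : (∑ i, ∑ j, Z i j ^ 2) = ∑ p : α × β, Z p.1 p.2 ^ 2 := by
      rw [← Finset.sum_product', Finset.univ_product_univ]
    rw [h1, h2, h3]
    exact Finset.sum_mul_sq_le_sq_mul_sq _ _ _
  exact le_of_sq_le_sq' h (mul_nonneg (frob_nonneg Y) (frob_nonneg Z))

lemma frob_smul_sq (c : ℝ) (M : Matrix α β ℝ) : frob (c • M) ^ 2 = c ^ 2 * frob M ^ 2 := by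
  rw [frob_sq, frob_sq]
  simp [Matrix.smul_apply, smul_eq_mul, mul_pow, Finset.mul_sum]

lemma frob_add_sq (Y Z : Matrix α β ℝ) :
    frob (Y + Z) ^ 2 = frob Y ^ 2 + 2 * mip Y Z + frob Z ^ 2 := by
  rw [← mip_self, ← mip_self, ← mip_self, mip_add_left, mip_add_right, mip_add_right,
    mip_comm Z Y]
  ring

lemma frob_sub_sq (Y Z : Matrix α β ℝ) :
    frob (Y - Z) ^ 2 = frob Y ^ 2 - 2 * mip Y Z + frob Z ^ 2 := by
  have h : Y - Z = Y + (-1 : ℝ) • Z := by simp [sub_eq_add_neg]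
  rw [h, frob_add_sq, mip_smul_right, frob_smul_sq]
  ring

lemma mip_mul (B : Matrix α β ℝ) (C : Matrix β γ ℝ) (G : Matrix α γ ℝ) :
    mip (B * C) G = mip B (G * Cᵀ) := by
  unfold mip
  simp only [Matrix.mul_apply, Matrix.transpose_apply, Finset.sum_mul, Finset.mul_sum]
  refine Finset.sum_congr rfl (fun i _ => ?_)
  rw [Finset.sum_comm]
  refine Finset.sum_congr rfl (fun p _ => Finset.sum_congr rfl (fun j _ => by ring))

end helpers

section op
variable {n r : ℕ}

lemma mulVec_frob_le (U : Matrix (Fin n) (Fin r) ℝ) (v : Fin r → ℝ) :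
    vnorm (U.mulVec v) ≤ frob U * vnorm v := by
  have h : vnorm (U.mulVec v) ^ 2 ≤ (frob U * vnorm v) ^ 2 := by
    rw [vnorm_sq, mul_pow, frob_sq, vnorm_sq, Finset.sum_mul]
    apply Finset.sum_le_sum
    intro i _
    have h2 := Finset.sum_mul_sq_le_sq_mul_sq Finset.univ (fun j => U i j) v
    simpa [Matrix.mulVec, dotProduct] using h2
  exact le_of_sq_le_sq' h (mul_nonneg (frob_nonneg U) (vnorm_nonneg v))

lemma opNorm_bddAbove (U : Matrix (Fin n) (Fin r) ℝ) :
    BddAbove { t : ℝ | ∃ V : Submodule ℝ (Fin r → ℝ), Module.finrank ℝ V = 1 ∧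
      ∀ v ∈ V, t * vnorm v ≤ vnorm (U.mulVec v) } := by
  refine ⟨frob U, fun t ht => ?_⟩
  obtain ⟨V, hV1, hVle⟩ := ht
  have hVbot : V ≠ ⊥ := by
    intro h
    rw [h, finrank_bot] at hV1
    exact one_ne_zero hV1.symm
  obtain ⟨v, hvV, hv⟩ := Submodule.exists_mem_ne_zero_of_ne_bot hVbot
  have h1 := hVle v hvV
  have h2 := mulVec_frob_le U v
  have h3 := vnorm_pos hv
  nlinarith

lemma opNorm_mulVec (U : Matrix (Fin n) (Fin r) ℝ) (v : Fin r → ℝ) :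
    vnorm (U.mulVec v) ≤ opNorm U * vnorm v := by
  by_cases hv : v = 0
  · subst hv
    simp [vnorm, Matrix.mulVec_zero]
  · have hvpos := vnorm_pos hv
    have hmem : vnorm (U.mulVec v) / vnorm v ∈ { t : ℝ | ∃ V : Submodule ℝ (Fin r → ℝ),
        Module.finrank ℝ V = 1 ∧ ∀ w ∈ V, t * vnorm w ≤ vnorm (U.mulVec w) } := by
      refine ⟨Submodule.span ℝ {v}, finrank_span_singleton hv, fun w hw => ?_⟩
      obtain ⟨c, rfl⟩ := Submodule.mem_span_singleton.mp hw
      rw [vnorm_smul, Matrix.mulVec_smul, vnorm_smul]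
      apply le_of_eq
      field_simp
    have hle := le_csSup (opNorm_bddAbove U) hmem
    rw [div_le_iff₀ hvpos] at hle
    calc vnorm (U.mulVec v) ≤ opNorm U * vnorm v := by
          simpa [opNorm, sval] using hle

lemma opNorm_nonneg (hr : 0 < r) (U : Matrix (Fin n) (Fin r) ℝ) : 0 ≤ opNorm U := by
  have hv : (Pi.single (⟨0, hr⟩ : Fin r) (1 : ℝ) : Fin r → ℝ) ≠ 0 := by
    intro h
    have h2 := congrFun h ⟨0, hr⟩
    simp at h2
  have hmem : (0 : ℝ) ∈ { t : ℝ | ∃ V : Submodule ℝ (Fin r → ℝ),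
      Module.finrank ℝ V = 1 ∧ ∀ w ∈ V, t * vnorm w ≤ vnorm (U.mulVec w) } :=
    ⟨Submodule.span ℝ ({Pi.single (⟨0, hr⟩ : Fin r) (1:ℝ)} : Set (Fin r → ℝ)), finrank_span_singleton hv,
      fun w _ => by rw [zero_mul]; exact vnorm_nonneg _⟩
  exact le_csSup (opNorm_bddAbove U) hmem

lemma rank_comb (P Q W : Matrix (Fin n) (Fin r) ℝ) (P' Q' W' : Matrix (Fin r) (Fin n) ℝ) :
    (P * P' + Q * Q' + W * W').rank ≤ 3 * r := by
  have h : P * P' + Q * Q' + W * W' =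
      Matrix.fromCols P (Matrix.fromCols Q W) *
        Matrix.fromRows P' (Matrix.fromRows Q' W') := by
    rw [Matrix.fromCols_mul_fromRows, Matrix.fromCols_mul_fromRows, add_assoc]
  rw [h]
  refine le_trans (Matrix.rank_mul_le_left _ _) (le_trans (Matrix.rank_le_card_width _) ?_)
  simp
  omega

end op


lemma frob_eq_zero {α β : Type*} [Fintype α] [Fintype β] {M : Matrix α β ℝ}
    (h : frob M = 0) : M = 0 := by
  have h2 : ∑ i, ∑ j, M i j ^ 2 = 0 := by
    rw [frob] at h
    exact (Real.sqrt_eq_zero (by positivity)).mp h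
  ext i j
  have h3 := (Finset.sum_eq_zero_iff_of_nonneg (fun i _ => by positivity)).mp h2 i
    (Finset.mem_univ i)
  have h4 := (Finset.sum_eq_zero_iff_of_nonneg (fun j _ => sq_nonneg _)).mp h3 j
    (Finset.mem_univ j)
  rw [Matrix.zero_apply]
  exact pow_eq_zero_iff (two_ne_zero) |>.mp h4

lemma rip_cross {m n r : ℕ} (A : Fin m → Matrix (Fin n) (Fin n) ℝ) (δ : ℝ)
    (hRIP : HasRIP A (6 * r) δ) (Y Z : Matrix (Fin n) (Fin n) ℝ)
    (h₁ : (Y + Z).rank ≤ 6 * r) (h₂ : (Y - Z).rank ≤ 6 * r) :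
    ∑ k, mapA A Y k * mapA A Z k ≤ mip Y Z + δ / 2 * (frob Y ^ 2 + frob Z ^ 2) := by
  obtain ⟨-, hu⟩ := hRIP (Y + Z) h₁
  obtain ⟨hl, -⟩ := hRIP (Y - Z) h₂
  have key : ∑ k, mapA A (Y + Z) k ^ 2 - ∑ k, mapA A (Y - Z) k ^ 2 =
      4 * ∑ k, mapA A Y k * mapA A Z k := by
    rw [← Finset.sum_sub_distrib, Finset.mul_sum]
    refine Finset.sum_congr rfl fun k _ => ?_
    have e1 : mapA A (Y + Z) k = mapA A Y k + mapA A Z k := mip_add_right _ _ _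
    have e2 : mapA A (Y - Z) k = mapA A Y k - mapA A Z k := mip_sub_right _ _ _
    rw [e1, e2]; ring
  rw [frob_add_sq] at hu
  rw [frob_sub_sq] at hl
  nlinarith [hu, hl, key]

/-- Lipschitz gradient bound around the optimum. -/
theorem lipschitz_gradient_bound {n r m : ℕ}
    (A : Fin m → Matrix (Fin n) (Fin n) ℝ) (δ : ℝ)
    (hRIP : HasRIP A (6 * r) δ) (hδ : δ ≤ 1 / 10)
    (X : Matrix (Fin n) (Fin r) ℝ) :
    ∀ U : Matrix (Fin n) (Fin r) ℝ,
      opNorm U ^ 2 * frob (U * Uᵀ - X * Xᵀ) ^ 2 ≥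
        (10 / 17) * frob (∑ k, mip (A k) (U * Uᵀ - X * Xᵀ) • (A k * U)) ^ 2 := by
  intro U
  rcases Nat.eq_zero_or_pos r with hr | hr
  · subst hr
    have hG : frob (∑ k, mip (A k) (U * Uᵀ - X * Xᵀ) • (A k * U)) = 0 := by
      rw [frob]; simp
    rw [hG]
    norm_num
    positivity
  · set E := U * Uᵀ - X * Xᵀ with hE
    set G := (∑ k, mip (A k) E • (A k * U)) with hG
    have hc0 : 0 ≤ frob (G * Uᵀ) := frob_nonneg _
    have hd0 : 0 ≤ frob E := frob_nonneg _
    have hG0 : 0 ≤ frob G := frob_nonneg _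
    have hop : 0 ≤ opNorm U := opNorm_nonneg hr U
    have key1 : frob G ^ 2 = ∑ k, mip (A k) E * mip (A k) (G * Uᵀ) := by
      rw [← mip_self]
      conv_lhs => rw [hG]
      rw [mip_sum_left]
      exact Finset.sum_congr rfl fun k _ => by rw [mip_smul_left, mip_mul]
    -- bound frob (G * Uᵀ) by opNorm U * frob G
    have hGU : frob (G * Uᵀ) ≤ opNorm U * frob G := by
      have hsq : frob (G * Uᵀ) ^ 2 ≤ (opNorm U * frob G) ^ 2 := by
        rw [frob_sq, mul_pow, frob_sq G, Finset.mul_sum]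
        apply Finset.sum_le_sum
        intro i _
        have h1 : ∀ j, (G * Uᵀ) i j = U.mulVec (fun k => G i k) j := by
          intro j
          simp [Matrix.mul_apply, Matrix.mulVec, dotProduct, Matrix.transpose_apply, mul_comm]
        calc ∑ j, (G * Uᵀ) i j ^ 2 = vnorm (U.mulVec (fun k => G i k)) ^ 2 := by
              rw [vnorm_sq]
              exact Finset.sum_congr rfl fun j _ => by rw [h1]
          _ ≤ (opNorm U * vnorm (fun k => G i k)) ^ 2 :=
              pow_le_pow_left₀ (vnorm_nonneg _) (opNorm_mulVec U _) 2
          _ = opNorm U ^ 2 * ∑ j, G i j ^ 2 := by rw [mul_pow, vnorm_sq]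
      exact le_of_sq_le_sq' hsq (mul_nonneg hop hG0)
    -- main RIP bound : frob G ^ 2 ≤ 11/10 * (frob E * frob (G * Uᵀ))
    by_cases hdc : frob E * frob (G * Uᵀ) = 0
    · have hzero : frob G ^ 2 = 0 := by
        rcases mul_eq_zero.mp hdc with h | h
        · have hE0 : E = 0 := frob_eq_zero h
          rw [key1]
          refine Finset.sum_eq_zero fun k _ => ?_
          rw [hE0]
          simp [mip]
        · have hGU0 : G * Uᵀ = 0 := frob_eq_zero h
          rw [key1]
          refine Finset.sum_eq_zero fun k _ => ?_
          rw [hGU0]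
          simp [mip]
      rw [hzero]
      norm_num
      positivity
    · have hd' : frob E ≠ 0 := fun h => hdc (by rw [h, zero_mul])
      have hc' : frob (G * Uᵀ) ≠ 0 := fun h => hdc (by rw [h, mul_zero])
      have hdpos : 0 < frob E := hd0.lt_of_ne (Ne.symm hd')
      have hcpos : 0 < frob (G * Uᵀ) := hc0.lt_of_ne (Ne.symm hc')
      -- rank facts
      have hrank1 : ((frob (G * Uᵀ) • E) + (frob E • (G * Uᵀ))).rank ≤ 6 * r := by
        have heq : (frob (G * Uᵀ) • E) + (frob E • (G * Uᵀ)) =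
            (frob (G * Uᵀ) • U) * Uᵀ + ((-(frob (G * Uᵀ))) • X) * Xᵀ + (frob E • G) * Uᵀ := by
          rw [hE, Matrix.smul_mul, Matrix.smul_mul, Matrix.smul_mul, smul_sub, neg_smul]
          abel
        rw [heq]
        exact le_trans (rank_comb _ _ _ _ _ _) (by omega)
      have hrank2 : ((frob (G * Uᵀ) • E) - (frob E • (G * Uᵀ))).rank ≤ 6 * r := by
        have heq : (frob (G * Uᵀ) • E) - (frob E • (G * Uᵀ)) =
            (frob (G * Uᵀ) • U) * Uᵀ + ((-(frob (G * Uᵀ))) • X) * Xᵀ +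
              ((-(frob E)) • G) * Uᵀ := by
          rw [hE, Matrix.smul_mul, Matrix.smul_mul, Matrix.smul_mul, smul_sub, neg_smul,
            neg_smul]
          abel
        rw [heq]
        exact le_trans (rank_comb _ _ _ _ _ _) (by omega)
      have hcross := rip_cross A δ hRIP (frob (G * Uᵀ) • E) (frob E • (G * Uᵀ)) hrank1 hrank2
      have hLHS : ∑ k, mapA A (frob (G * Uᵀ) • E) k * mapA A (frob E • (G * Uᵀ)) k =
          frob (G * Uᵀ) * frob E * ∑ k, mip (A k) E * mip (A k) (G * Uᵀ) := by
        rw [Finset.mul_sum]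
        refine Finset.sum_congr rfl fun k _ => ?_
        simp only [mapA, mip_smul_right]
        ring
      rw [hLHS] at hcross
      rw [mip_smul_left, mip_smul_right, frob_smul_sq, frob_smul_sq] at hcross
      have hmle : mip E (G * Uᵀ) ≤ frob E * frob (G * Uᵀ) := mip_le _ _
      have hcdpos : 0 < frob (G * Uᵀ) * frob E := mul_pos hcpos hdpos
      have main2 : frob G ^ 2 ≤ 11 / 10 * (frob E * frob (G * Uᵀ)) := by
        have h5 : frob (G * Uᵀ) * frob E * (frob G ^ 2) ≤
            frob (G * Uᵀ) * frob E * (11 / 10 * (frob E * frob (G * Uᵀ))) := by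
          rw [key1]
          refine le_trans hcross ?_
          nlinarith [mul_le_mul_of_nonneg_left hmle (le_of_lt hcdpos),
            mul_le_mul_of_nonneg_right
              (mul_le_mul_of_nonneg_right hδ (le_of_lt hcdpos))
              (le_of_lt hcdpos)]
        exact le_of_mul_le_mul_left h5 hcdpos
      have h4 : frob G ≤ 11 / 10 * (frob E * opNorm U) := by
        by_cases hg : frob G = 0
        · rw [hg]
          exact mul_nonneg (by norm_num) (mul_nonneg hd0 hop)
        · have hgpos : 0 < frob G := hG0.lt_of_ne (Ne.symm hg)
          have h6 : frob G * frob G ≤ (11 / 10 * (frob E * opNorm U)) * frob G := by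
            nlinarith [main2, mul_le_mul_of_nonneg_left hGU (le_of_lt hdpos)]
          exact le_of_mul_le_mul_right h6 hgpos
      have h7 : frob G ^ 2 ≤ (11 / 10 * (frob E * opNorm U)) ^ 2 :=
        pow_le_pow_left₀ hG0 h4 2
      nlinarith [h7, mul_nonneg hd0 hop, sq_nonneg (frob E * opNorm U)]
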